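/- Let F be a bipartite graph with at least one edge, let p = p(F) be the smallest possible order of a color class in a proper two-coloring of F, and let s ≥ p be a fixed integer. Then ex(n, {F, M_{s+1}}) = (p − 1)n + O(1); that is, there exists a constant C = C(F, s) such that for all n, |ex(n, {F, M_{s+1}}) − (p − 1)n| ≤ C. -/

import Mathlib

open SimpleGraph Finset

/-- `Contains G H` means `G` contains a copy of `H`: an injective map preserving adjacency
(i.e. an injective graph homomorphism; isolated vertices of `H` need distinct hosts in `G`). -/
def Contains {V W : Type*} (G : SimpleGraph V) (H : SimpleGraph W) : Prop :=
  ∃ f : W → V, Function.Injective f ∧ ∀ ⦃a b : W⦄, H.Adj a b → G.Adj (f a) (f b)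

/-- `matchingGraph t` is the matching `M_t` consisting of `t` independent edges. -/
def matchingGraph (t : ℕ) : SimpleGraph (Fin t × Fin 2) :=
  SimpleGraph.fromRel (fun a b => a.1 = b.1)

/-- The number of edges of a graph. -/
noncomputable def edgeCount {V : Type*} (G : SimpleGraph V) : ℕ := G.edgeSet.ncard

/-- `exNum n P` is the maximum number of edges of an `n`-vertex graph satisfying the
freeness condition `P` (the extremal/Turán number). -/
noncomputable def exNum (n : ℕ) (P : SimpleGraph (Fin n) → Prop) : ℕ :=
  sSup {m | ∃ G : SimpleGraph (Fin n), P G ∧ m = edgeCount G}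

/-- `I` is a deletable color class of `F`: an independent set whose deletion decreases the
chromatic number (equivalently, a color class in some proper coloring of `F` with `χ(F)`
colors). `F.induce Iᶜ` is `F − I`, with isolated vertices retained. -/
def colorClassDel {V : Type*} (F : SimpleGraph V) (I : Set V) : Prop :=
  (∀ a ∈ I, ∀ b ∈ I, ¬ F.Adj a b) ∧ (F.induce Iᶜ).chromaticNumber < F.chromaticNumber

/-- `A` is a color class of a proper two-coloring of `F`: both `A` and its complement are
independent sets. -/
def twoColorClass {V : Type*} (F : SimpleGraph V) (A : Set V) : Prop :=
  (∀ a ∈ A, ∀ b ∈ A, ¬ F.Adj a b) ∧ (∀ a ∈ Aᶜ, ∀ b ∈ Aᶜ, ¬ F.Adj a b)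

attribute [local instance] Classical.propDecidable

def bip (n q : ℕ) : SimpleGraph (Fin n) where
  Adj i j := ((i : ℕ) < q) ≠ ((j : ℕ) < q)
  symm := ⟨fun _ _ h => Ne.symm h⟩
  loopless := ⟨fun _ h => h rfl⟩

lemma mg_adj {t : ℕ} {x y : Fin t × Fin 2} :
    (matchingGraph t).Adj x y ↔ x ≠ y ∧ x.1 = y.1 := by
  simp only [matchingGraph, SimpleGraph.fromRel_adj]
  constructor
  · rintro ⟨h1, h2 | h2⟩
    · exact ⟨h1, h2⟩
    · exact ⟨h1, h2.symm⟩
  · rintro ⟨h1, h2⟩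
    exact ⟨h1, Or.inl h2⟩

lemma contains_matching {n t : ℕ} {G : SimpleGraph (Fin n)} (a b : Fin t → Fin n)
    (hadj : ∀ k, G.Adj (a k) (b k))
    (hdisj : ∀ k l, k ≠ l → a k ≠ a l ∧ a k ≠ b l ∧ b k ≠ a l ∧ b k ≠ b l) :
    Contains G (matchingGraph t) := by
  classical
  refine ⟨fun x => if x.2 = 0 then a x.1 else b x.1, ?_, ?_⟩
  · rintro ⟨k, i⟩ ⟨l, j⟩ h
    simp only at h
    by_cases hkl : k = l
    · subst hkl
      suffices hij : i = j by rw [hij]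
      by_contra hij
      have hne := G.ne_of_adj (hadj k)
      fin_cases i <;> fin_cases j <;> simp_all
    · exfalso
      have hd := hdisj k l hkl
      fin_cases i <;> fin_cases j <;> simp_all
  · rintro ⟨k, i⟩ ⟨l, j⟩ hadj'
    rw [mg_adj] at hadj'
    obtain ⟨hne, hfst⟩ := hadj'
    simp only at hfst
    subst hfst
    have hij : i ≠ j := fun h => hne (by rw [h])
    by_cases hi : i = 0
    · have hj : j ≠ 0 := fun h => hij (by rw [hi, h])
      simp [hi, hj]; exact hadj k
    · have hj : j = 0 := by omega
      simp [hi, hj]; exact (hadj k).symm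

lemma exists_cover {n s : ℕ} {G : SimpleGraph (Fin n)}
    (h : ¬ Contains G (matchingGraph (s + 1))) :
    ∃ B : Finset (Fin n), B.card ≤ 2 * s ∧ ∀ ⦃a b⦄, G.Adj a b → a ∈ B ∨ b ∈ B := by
  classical
  set SS : Set (Finset (Fin n × Fin n)) :=
    {m | (∀ e ∈ m, G.Adj e.1 e.2) ∧
      ∀ e ∈ m, ∀ e' ∈ m, e ≠ e' →
        e.1 ≠ e'.1 ∧ e.1 ≠ e'.2 ∧ e.2 ≠ e'.1 ∧ e.2 ≠ e'.2} with hSS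
  obtain ⟨m, hm, hmax⟩ := Set.Finite.exists_maximalFor Finset.card SS (Set.toFinite SS)
    ⟨∅, by simp [hSS]⟩
  have hcard : m.card ≤ s := by
    by_contra hc
    push_neg at hc
    obtain ⟨m', hm'sub, hm'card⟩ := Finset.exists_subset_card_eq (show s + 1 ≤ m.card by omega)
    have e := (Finset.equivFinOfCardEq hm'card).symm
    refine h (contains_matching (fun k => ((e k : Fin n × Fin n)).1)
      (fun k => ((e k : Fin n × Fin n)).2) (fun k => hm.1 _ (hm'sub (e k).2)) ?_)
    intro k l hkl
    exact hm.2 _ (hm'sub (e k).2) _ (hm'sub (e l).2)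
      (fun hh => hkl (e.injective (Subtype.ext hh)))
  refine ⟨m.biUnion (fun e => {e.1, e.2}), ?_, ?_⟩
  · calc (m.biUnion fun e => {e.1, e.2}).card ≤ ∑ e ∈ m, ({e.1, e.2} : Finset (Fin n)).card :=
        Finset.card_biUnion_le
    _ ≤ ∑ e ∈ m, 2 := Finset.sum_le_sum (fun e _ => Finset.card_insert_le _ _ |>.trans (by simp))
    _ = 2 * m.card := by rw [Finset.sum_const, smul_eq_mul, mul_comm]
    _ ≤ 2 * s := by omega
  · intro a b hab
    by_contra hcon
    push_neg at hcon
    obtain ⟨ha, hb⟩ := hcon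
    have hmem : ∀ e ∈ m, a ≠ e.1 ∧ a ≠ e.2 ∧ b ≠ e.1 ∧ b ≠ e.2 := by
      intro e he
      refine ⟨?_, ?_, ?_, ?_⟩ <;> rintro rfl
      · exact ha (Finset.mem_biUnion.mpr ⟨e, he, by simp⟩)
      · exact ha (Finset.mem_biUnion.mpr ⟨e, he, by simp⟩)
      · exact hb (Finset.mem_biUnion.mpr ⟨e, he, by simp⟩)
      · exact hb (Finset.mem_biUnion.mpr ⟨e, he, by simp⟩)
    have habm : (a, b) ∉ m := fun hh => ha (Finset.mem_biUnion.mpr ⟨_, hh, by simp⟩)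
    have hins : insert (a, b) m ∈ SS := by
      constructor
      · intro e he
        rcases Finset.mem_insert.mp he with rfl | he'
        · exact hab
        · exact hm.1 e he'
      · intro e he e' he' hne
        rcases Finset.mem_insert.mp he with rfl | he1 <;>
          rcases Finset.mem_insert.mp he' with rfl | he2
        · exact absurd rfl hne
        · have := hmem e' he2; simp only [] at this ⊢; tauto
        · have := hmem e he1; simp only [] at this ⊢; tauto
        · exact hm.2 e he1 e' he2 hne
    have := hmax hins (Finset.card_le_card (Finset.subset_insert _ _))
    rw [Finset.card_insert_of_notMem habm] at this
    omega

lemma filt_card {n q : ℕ} (h : q ≤ n) :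
    (Finset.univ.filter (fun i : Fin n => (i : ℕ) < q)).card = q := by
  have heq : (Finset.univ.filter (fun i : Fin n => (i : ℕ) < q)) =
      Finset.image (Fin.castLE h) Finset.univ := by
    ext x
    simp only [Finset.mem_filter, Finset.mem_univ, true_and, Finset.mem_image]
    constructor
    · intro hx
      exact ⟨⟨x, hx⟩, rfl⟩

    · rintro ⟨a, -, rfl⟩
      exact a.2
  rw [heq, Finset.card_image_of_injective _ (Fin.castLE_injective h)]
  simp

lemma bip_deg_lt {n q : ℕ} (hq : q ≤ n) (v : Fin n) (hv : (v : ℕ) < q) :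
    (bip n q).degree v = n - q := by
  have : (bip n q).neighborFinset v = Finset.univ.filter (fun w : Fin n => ¬ ((w : ℕ) < q)) := by
    ext w
    simp only [SimpleGraph.mem_neighborFinset, Finset.mem_filter, Finset.mem_univ, true_and]
    constructor
    · intro hadj hw
      exact hadj (by rw [eq_iff_iff]; exact iff_of_true hv hw)
    · intro hw heq
      rw [eq_iff_iff] at heq
      exact hw (heq.mp hv)
  unfold SimpleGraph.degree
  rw [this]
  have h1 := Finset.card_filter_add_card_filter_not
    (s := (Finset.univ : Finset (Fin n))) (p := fun w : Fin n => (w : ℕ) < q)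
  rw [filt_card hq] at h1
  simp only [Finset.card_univ, Fintype.card_fin] at h1
  omega

lemma bip_deg_ge {n q : ℕ} (hq : q ≤ n) (v : Fin n) (hv : ¬ ((v : ℕ) < q)) :
    (bip n q).degree v = q := by
  have : (bip n q).neighborFinset v = Finset.univ.filter (fun w : Fin n => (w : ℕ) < q) := by
    ext w
    simp only [SimpleGraph.mem_neighborFinset, Finset.mem_filter, Finset.mem_univ, true_and]
    constructor
    · intro hadj
      by_contra hw
      exact hadj (by rw [eq_iff_iff]; exact iff_of_false hv hw)
    · intro hw heq
      rw [eq_iff_iff] at heq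
      exact hv (heq.mpr hw)
  unfold SimpleGraph.degree
  rw [this, filt_card hq]

lemma bip_edgeCount {n q : ℕ} (hq : q ≤ n) :
    (bip n q).edgeFinset.card = q * (n - q) := by
  have hh := SimpleGraph.sum_degrees_eq_twice_card_edges (bip n q)
  have hsplit := Finset.sum_filter_add_sum_filter_not (Finset.univ : Finset (Fin n))
    (fun v : Fin n => (v : ℕ) < q) (fun v => (bip n q).degree v)
  have h1 : ∑ v ∈ Finset.univ.filter (fun v : Fin n => (v : ℕ) < q), (bip n q).degree v
      = q * (n - q) := by
    rw [Finset.sum_congr rfl (fun v hv => bip_deg_lt hq v (Finset.mem_filter.mp hv).2),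
      Finset.sum_const, filt_card hq, smul_eq_mul]
  have h2 : ∑ v ∈ Finset.univ.filter (fun v : Fin n => ¬ ((v : ℕ) < q)), (bip n q).degree v
      = (n - q) * q := by
    rw [Finset.sum_congr rfl (fun v hv => bip_deg_ge hq v (Finset.mem_filter.mp hv).2),
      Finset.sum_const, smul_eq_mul]
    congr 1
    have h1 := Finset.card_filter_add_card_filter_not
      (s := (Finset.univ : Finset (Fin n))) (p := fun w : Fin n => (w : ℕ) < q)
    rw [filt_card hq] at h1
    simp only [Finset.card_univ, Fintype.card_fin] at h1
    omega
  rw [h1] at hsplit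
  simp only [h2, Nat.mul_comm (n - q) q, hh] at hsplit
  omega

lemma bip_F_free {V : Type*} [Fintype V] (F : SimpleGraph V) (p n : ℕ)
    (hlb : ∀ A : Set V, twoColorClass F A → p ≤ A.ncard) (hp1 : 1 ≤ p)
    (hqn : p - 1 ≤ n) : ¬ Contains (bip n (p - 1)) F := by
  rintro ⟨f, hinj, hadj⟩
  set A : Set V := {v | ((f v : ℕ) < p - 1)} with hA
  have htcc : twoColorClass F A := by
    constructor
    · intro a ha b hb hadj'
      exact (hadj hadj') (by rw [eq_iff_iff]; exact iff_of_true ha hb)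
    · intro a ha b hb hadj'
      exact (hadj hadj') (by rw [eq_iff_iff]; exact iff_of_false ha hb)
  have hge := hlb A htcc
  have hle : A.ncard ≤ p - 1 := by
    rw [Set.ncard_eq_toFinset_card' A]
    calc A.toFinset.card ≤ (Finset.univ.filter (fun i : Fin n => (i : ℕ) < p - 1)).card := by
          apply Finset.card_le_card_of_injOn f
          · intro a ha
            simp only [Finset.mem_coe, Finset.mem_filter, Finset.mem_univ, true_and]
            have ha' : a ∈ A := Set.mem_toFinset.mp ha
            exact ha'
          · exact hinj.injOn
      _ = p - 1 := filt_card hqn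
  omega

lemma bip_M_free {n p s : ℕ} (hp1 : 1 ≤ p) (hps : p ≤ s) (hqn : p - 1 ≤ n) :
    ¬ Contains (bip n (p - 1)) (matchingGraph (s + 1)) := by
  rintro ⟨f, hinj, hadj⟩
  have key : ∀ k : Fin (s + 1), (bip n (p - 1)).Adj (f (k, 0)) (f (k, 1)) := by
    intro k
    apply hadj
    rw [mg_adj]
    have h01 : (0 : Fin 2) ≠ 1 := by decide
    exact ⟨fun h => h01 (congrArg Prod.snd h), rfl⟩
  set g : Fin (s + 1) → Fin n :=
    fun k => if ((f (k, 0)) : ℕ) < p - 1 then f (k, 0) else f (k, 1) with hgdef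
  have hg : ∀ k, ((g k) : ℕ) < p - 1 := by
    intro k
    rw [hgdef]
    simp only
    split_ifs with h
    · exact h
    · by_contra h2
      exact (key k) (by rw [eq_iff_iff]; exact iff_of_false h h2)
  have hginj : Function.Injective g := by
    intro k l hgl
    have hk : g k = f (k, 0) ∨ g k = f (k, 1) := by
      rw [hgdef]; simp only; split_ifs <;> simp
    have hl : g l = f (l, 0) ∨ g l = f (l, 1) := by
      rw [hgdef]; simp only; split_ifs <;> simp
    rcases hk with hk | hk <;> rcases hl with hl | hl <;>
      · rw [hk, hl] at hgl
        exact congrArg Prod.fst (hinj hgl)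
  have himg : Finset.univ.image g ⊆ Finset.univ.filter (fun i : Fin n => (i : ℕ) < p - 1) := by
    intro x hx
    obtain ⟨k, -, rfl⟩ := Finset.mem_image.mp hx
    simp only [Finset.mem_filter, Finset.mem_univ, true_and]
    exact hg k
  have := Finset.card_le_card himg
  rw [Finset.card_image_of_injective _ hginj, filt_card hqn] at this
  simp only [Finset.card_univ, Fintype.card_fin] at this
  omega

lemma bot_F_free {V W : Type*} (F : SimpleGraph W) (hedge : F.edgeSet.Nonempty) :
    ¬ Contains (⊥ : SimpleGraph V) F := by
  rintro ⟨f, -, hadj⟩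
  obtain ⟨e, he⟩ := hedge
  induction e with
  | _ a b =>
    rw [SimpleGraph.mem_edgeSet] at he
    simpa using hadj he

lemma bot_M_free {V : Type*} (s : ℕ) : ¬ Contains (⊥ : SimpleGraph V) (matchingGraph (s + 1)) := by
  rintro ⟨f, -, hadj⟩
  have h01 : (0 : Fin 2) ≠ 1 := by decide
  have := hadj (a := (⟨0, Nat.succ_pos s⟩, 0)) (b := (⟨0, Nat.succ_pos s⟩, 1))
    (mg_adj.mpr ⟨fun h => h01 (congrArg Prod.snd h), rfl⟩)
  simpa using this

lemma upper_bound {V : Type*} [Fintype V] (F : SimpleGraph V) (p s n : ℕ) (A₀ : Set V)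
    (hA₀ : twoColorClass F A₀) (hA₀c : A₀.ncard = p) (hps : p ≤ s)
    (G : SimpleGraph (Fin n)) (hF : ¬ Contains G F)
    (hM : ¬ Contains G (matchingGraph (s + 1))) :
    G.edgeFinset.card ≤ (p - 1) * n +
      (2 * s * (2 * s + 1) + ((2 * s).choose p * Fintype.card V) * (2 * s)) := by
  classical
  obtain ⟨B, hBcard, hBcover⟩ := exists_cover hM
  have hnb : ∀ v : Fin n, v ∉ B → G.neighborFinset v ⊆ B := by
    intro v hv u hu
    rcases hBcover ((SimpleGraph.mem_neighborFinset G v u).mp hu) with h | h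
    · exact absurd h hv
    · exact h
  have hdegB : ∀ v : Fin n, v ∉ B → G.degree v ≤ 2 * s :=
    fun v hv => le_trans (Finset.card_le_card (hnb v hv)) hBcard
  set D : Finset (Fin n) := (Finset.univ \ B).filter (fun v => p ≤ G.degree v) with hD
  -- the key claim : D is small
  have hDcard : D.card ≤ (2 * s).choose p * Fintype.card V := by
    by_contra hc
    push_neg at hc
    set g : Fin n → Finset (Fin n) := fun v =>
      if h : p ≤ (G.neighborFinset v).card then (Finset.exists_subset_card_eq h).choose
      else ∅ with hg
    have hgspec : ∀ v ∈ D, g v ⊆ G.neighborFinset v ∧ (g v).card = p := by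
      intro v hv
      have hdeg : p ≤ (G.neighborFinset v).card := (Finset.mem_filter.mp hv).2
      rw [hg]
      simp only [dif_pos hdeg]
      obtain ⟨h1, h2⟩ := (Finset.exists_subset_card_eq hdeg).choose_spec
      exact ⟨h1, h2⟩
    have hmaps : ∀ v ∈ D, g v ∈ B.powersetCard p := by
      intro v hv
      obtain ⟨h1, h2⟩ := hgspec v hv
      refine Finset.mem_powersetCard.mpr ⟨h1.trans (hnb v ?_), h2⟩
      exact (Finset.mem_sdiff.mp (Finset.mem_filter.mp hv).1).2
    have hsize : (B.powersetCard p).card * Fintype.card V < D.card := by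
      rw [Finset.card_powersetCard]
      calc B.card.choose p * Fintype.card V ≤ (2 * s).choose p * Fintype.card V := by
            exact Nat.mul_le_mul_right _ (Nat.choose_le_choose p hBcard)
        _ < D.card := hc
    obtain ⟨S, hS, hWcard⟩ := Finset.exists_lt_card_fiber_of_mul_lt_card_of_maps_to hmaps hsize
    set W : Finset (Fin n) := D.filter (fun v => g v = S) with hW
    obtain ⟨hSB, hScard⟩ := Finset.mem_powersetCard.mp hS
    -- every vertex of W is adjacent to every vertex of S
    have hadjSW : ∀ w ∈ W, ∀ x ∈ S, G.Adj w x := by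
      intro w hw x hx
      have hwD : w ∈ D := (Finset.mem_filter.mp hw).1
      have hgw : g w = S := (Finset.mem_filter.mp hw).2
      have := (hgspec w hwD).1
      rw [hgw] at this
      exact (SimpleGraph.mem_neighborFinset G w x).mp (this hx)
    have hWB : ∀ w ∈ W, w ∉ B := by
      intro w hw
      exact (Finset.mem_sdiff.mp (Finset.mem_filter.mp ((Finset.mem_filter.mp hw).1)).1).2
    have hSWdisj : ∀ x ∈ S, x ∉ W := fun x hx hxW => hWB x hxW (hSB hx)
    -- build a copy of F in G
    have hA₀fin : A₀.toFinset.card = p := by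
      rw [← Set.ncard_eq_toFinset_card']; exact hA₀c
    have hcompl : A₀.toFinsetᶜ.card = Fintype.card V - p := by
      rw [Finset.card_compl, hA₀fin]
    obtain ⟨W', hW'sub, hW'card⟩ := Finset.exists_subset_card_eq
      (show Fintype.card V - p ≤ W.card by omega)
    have e₁ : (A₀.toFinset : Finset V) ≃ (S : Finset (Fin n)) :=
      Finset.equivOfCardEq (by rw [hA₀fin, hScard])
    have e₂ : (A₀.toFinsetᶜ : Finset V) ≃ (W' : Finset (Fin n)) :=
      Finset.equivOfCardEq (by rw [hcompl, hW'card])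
    set f : V → Fin n := fun v =>
      if h : v ∈ A₀.toFinset then (e₁ ⟨v, h⟩ : Fin n)
      else (e₂ ⟨v, Finset.mem_compl.mpr h⟩ : Fin n) with hf
    have hfS : ∀ v (h : v ∈ A₀.toFinset), f v = (e₁ ⟨v, h⟩ : Fin n) := by
      intro v h; rw [hf]; simp only [dif_pos h]
    have hfW : ∀ v (h : v ∉ A₀.toFinset), f v = (e₂ ⟨v, Finset.mem_compl.mpr h⟩ : Fin n) := by
      intro v h; rw [hf]; simp only [dif_neg h]
    have hfSmem : ∀ v (h : v ∈ A₀.toFinset), f v ∈ S := by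
      intro v h; rw [hfS v h]; exact (e₁ ⟨v, h⟩).2
    have hfWmem : ∀ v (h : v ∉ A₀.toFinset), f v ∈ W := by
      intro v h; rw [hfW v h]; exact hW'sub (e₂ ⟨v, Finset.mem_compl.mpr h⟩).2
    have hfinj : Function.Injective f := by
      intro a b hab
      by_cases ha : a ∈ A₀.toFinset <;> by_cases hb : b ∈ A₀.toFinset
      · rw [hfS a ha, hfS b hb] at hab
        have := e₁.injective (Subtype.ext hab)
        exact congrArg Subtype.val this
      · exfalso
        have h1 := hfSmem a ha
        have h2 := hfWmem b hb
        rw [hab] at h1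
        exact hSWdisj _ h1 h2
      · exfalso
        have h1 := hfSmem b hb
        have h2 := hfWmem a ha
        rw [← hab] at h1
        exact hSWdisj _ h1 h2
      · rw [hfW a ha, hfW b hb] at hab
        have := e₂.injective (Subtype.ext hab)
        exact congrArg Subtype.val this
    refine hF ⟨f, hfinj, ?_⟩
    intro a b hadj
    by_cases ha : a ∈ A₀.toFinset <;> by_cases hb : b ∈ A₀.toFinset
    · exact absurd hadj (hA₀.1 a (Set.mem_toFinset.mp ha) b (Set.mem_toFinset.mp hb))
    · exact (hadjSW _ (hfWmem b hb) _ (hfSmem a ha)).symm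
    · exact hadjSW _ (hfWmem a ha) _ (hfSmem b hb)
    · exact absurd hadj (hA₀.2 a (fun h => ha (Set.mem_toFinset.mpr h))
        b (fun h => hb (Set.mem_toFinset.mpr h)))
  -- now count edges
  have hsplit := Finset.card_filter_add_card_filter_not
    (s := G.edgeFinset) (p := fun e => e ∈ B.sym2)
  have hin : (G.edgeFinset.filter (fun e => e ∈ B.sym2)).card ≤ 2 * s * (2 * s + 1) := by
    calc (G.edgeFinset.filter (fun e => e ∈ B.sym2)).card ≤ B.sym2.card :=
          Finset.card_le_card (fun e he => (Finset.mem_filter.mp he).2)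
      _ = (B.card + 1).choose 2 := Finset.card_sym2 B
      _ ≤ (2 * s + 1).choose 2 := Nat.choose_le_choose 2 (by omega)
      _ ≤ 2 * s * (2 * s + 1) := by
          rw [Nat.choose_two_right]
          have h : (2 * s + 1) - 1 = 2 * s := by omega
          rw [h]
          calc (2 * s + 1) * (2 * s) / 2 ≤ (2 * s + 1) * (2 * s) := Nat.div_le_self _ _
            _ = 2 * s * (2 * s + 1) := Nat.mul_comm _ _
  have hout : (G.edgeFinset.filter (fun e => e ∉ B.sym2)).card ≤
      ∑ v ∈ Finset.univ \ B, G.degree v := by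
    have hsub : G.edgeFinset.filter (fun e => e ∉ B.sym2) ⊆
        (Finset.univ \ B).biUnion (fun v => G.incidenceFinset v) := by
      intro e he
      obtain ⟨heE, heB⟩ := Finset.mem_filter.mp he
      rw [Finset.mem_sym2_iff] at heB
      push_neg at heB
      obtain ⟨v, hve, hvB⟩ := heB
      refine Finset.mem_biUnion.mpr ⟨v, Finset.mem_sdiff.mpr ⟨Finset.mem_univ _, hvB⟩, ?_⟩
      rw [SimpleGraph.mem_incidenceFinset]
      exact ⟨SimpleGraph.mem_edgeFinset.mp heE, hve⟩
    calc (G.edgeFinset.filter (fun e => e ∉ B.sym2)).card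
        ≤ ((Finset.univ \ B).biUnion (fun v => G.incidenceFinset v)).card :=
          Finset.card_le_card hsub
      _ ≤ ∑ v ∈ Finset.univ \ B, (G.incidenceFinset v).card := Finset.card_biUnion_le
      _ = ∑ v ∈ Finset.univ \ B, G.degree v := by
          refine Finset.sum_congr rfl (fun v _ => ?_)
          exact G.card_incidenceFinset_eq_degree v
  have hsum : ∑ v ∈ Finset.univ \ B, G.degree v ≤
      ((2 * s).choose p * Fintype.card V) * (2 * s) + (p - 1) * n := by
    have hsplit2 := Finset.sum_filter_add_sum_filter_not (Finset.univ \ B)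
      (fun v => p ≤ G.degree v) (fun v => G.degree v)
    have h1 : ∑ v ∈ (Finset.univ \ B).filter (fun v => p ≤ G.degree v), G.degree v ≤
        ((2 * s).choose p * Fintype.card V) * (2 * s) := by
      calc ∑ v ∈ D, G.degree v ≤ ∑ v ∈ D, 2 * s := by
            refine Finset.sum_le_sum (fun v hv => hdegB v ?_)
            exact (Finset.mem_sdiff.mp (Finset.mem_filter.mp hv).1).2
        _ = D.card * (2 * s) := by rw [Finset.sum_const, smul_eq_mul]
        _ ≤ ((2 * s).choose p * Fintype.card V) * (2 * s) :=
            Nat.mul_le_mul_right _ hDcard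
    have h2 : ∑ v ∈ (Finset.univ \ B).filter (fun v => ¬ p ≤ G.degree v), G.degree v ≤
        (p - 1) * n := by
      calc ∑ v ∈ (Finset.univ \ B).filter (fun v => ¬ p ≤ G.degree v), G.degree v
          ≤ ∑ _v ∈ (Finset.univ \ B).filter (fun v => ¬ p ≤ G.degree v), (p - 1) := by
            refine Finset.sum_le_sum (fun v hv => ?_)
            have := (Finset.mem_filter.mp hv).2
            omega
        _ = ((Finset.univ \ B).filter (fun v => ¬ p ≤ G.degree v)).card * (p - 1) := by
            rw [Finset.sum_const, smul_eq_mul]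
        _ ≤ n * (p - 1) := by
            refine Nat.mul_le_mul_right _ ?_
            calc ((Finset.univ \ B).filter (fun v => ¬ p ≤ G.degree v)).card
                ≤ (Finset.univ : Finset (Fin n)).card :=
                  Finset.card_le_card (fun v hv => Finset.mem_univ _)
              _ = n := by simp
        _ = (p - 1) * n := Nat.mul_comm _ _
    omega
  omega

/-- **Proposition 2 (asymptotics).** If `F` is bipartite with at least one edge and
`p = p(F) ≤ s` is the smallest order of a color class in a proper two-coloring of `F`,
then `ex(n, {F, M_{s+1}}) = (p − 1)n + O(1)`. -/
theorem bipartite_extremal_asymptotic {V : Type*} [Fintype V] (F : SimpleGraph V)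
    (hedge : F.edgeSet.Nonempty) (p s : ℕ)
    (hp : IsLeast {k : ℕ | ∃ A : Set V, twoColorClass F A ∧ A.ncard = k} p)
    (hps : p ≤ s) :
    ∃ C : ℤ, ∀ n : ℕ,
      |(exNum n (fun G => ¬ Contains G F ∧ ¬ Contains G (matchingGraph (s + 1))) : ℤ) -
          ((p : ℤ) - 1) * (n : ℤ)| ≤ C := by
  classical
  obtain ⟨⟨A₀, hA₀, hA₀c⟩, hlb'⟩ := hp
  have hlb : ∀ A : Set V, twoColorClass F A → p ≤ A.ncard := fun A hA => hlb' ⟨A, hA, rfl⟩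
  have hp1 : 1 ≤ p := by
    by_contra h
    have hp0 : p = 0 := by omega
    have hempty : A₀ = ∅ := (Set.ncard_eq_zero (Set.toFinite _)).mp (by omega)
    obtain ⟨e, he⟩ := hedge
    induction e with
    | _ a b =>
      rw [SimpleGraph.mem_edgeSet] at he
      exact hA₀.2 a (by simp [hempty]) b (by simp [hempty]) he
  set C₁ : ℕ := 2 * s * (2 * s + 1) + ((2 * s).choose p * Fintype.card V) * (2 * s) with hC₁
  refine ⟨(C₁ : ℤ) + (p : ℤ) * p, fun n => ?_⟩
  have hec : ∀ G : SimpleGraph (Fin n), edgeCount G = G.edgeFinset.card := by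
    intro G
    rw [edgeCount, ← SimpleGraph.coe_edgeFinset, Set.ncard_coe_finset]
  set Pr : SimpleGraph (Fin n) → Prop :=
    fun G => ¬ Contains G F ∧ ¬ Contains G (matchingGraph (s + 1)) with hPr
  set SS : Set ℕ := {m | ∃ G : SimpleGraph (Fin n), Pr G ∧ m = edgeCount G} with hSS
  have hexnum : exNum n Pr = sSup SS := rfl
  have hub : ∀ m ∈ SS, m ≤ (p - 1) * n + C₁ := by
    rintro m ⟨G, ⟨h1, h2⟩, rfl⟩
    rw [hec]
    exact upper_bound F p s n A₀ hA₀ hA₀c hps G h1 h2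
  have hbdd : BddAbove SS := ⟨(p - 1) * n + C₁, fun m hm => hub m hm⟩
  have hne : SS.Nonempty := ⟨edgeCount (⊥ : SimpleGraph (Fin n)), ⊥,
    ⟨bot_F_free F hedge, bot_M_free s⟩, rfl⟩
  have hsup_le : exNum n Pr ≤ (p - 1) * n + C₁ := by
    rw [hexnum]; exact csSup_le hne hub
  have hcastp : ((p - 1 : ℕ) : ℤ) = (p : ℤ) - 1 := by
    rw [Nat.cast_sub hp1]; simp
  have hge : ((p : ℤ) - 1) * n - (p : ℤ) * p ≤ (exNum n Pr : ℤ) := by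
    by_cases hqn : p - 1 ≤ n
    · have hmem : edgeCount (bip n (p - 1)) ∈ SS :=
        ⟨bip n (p - 1), ⟨bip_F_free F p n hlb hp1 hqn, bip_M_free hp1 hps hqn⟩, rfl⟩
      have hle : edgeCount (bip n (p - 1)) ≤ exNum n Pr := by
        rw [hexnum]; exact le_csSup hbdd hmem
      have hecb : edgeCount (bip n (p - 1)) = (p - 1) * (n - (p - 1)) := by
        rw [hec]; exact bip_edgeCount hqn
      have hkey : ((p : ℤ) - 1) * n - (p : ℤ) * p ≤ ((p - 1) * (n - (p - 1)) : ℕ) := by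
        rw [Nat.cast_mul, hcastp, Nat.cast_sub hqn, hcastp]
        nlinarith [sq_nonneg ((p : ℤ) - 1), Nat.cast_nonneg (α := ℤ) p]
      calc ((p : ℤ) - 1) * n - (p : ℤ) * p ≤ ((p - 1) * (n - (p - 1)) : ℕ) := hkey
        _ = (edgeCount (bip n (p - 1)) : ℤ) := by rw [hecb]
        _ ≤ (exNum n Pr : ℤ) := Int.ofNat_le.mpr hle
    · have hn : (n : ℤ) ≤ (p : ℤ) - 1 := by
        have : n ≤ p - 1 := by omega
        omega
      have : ((p : ℤ) - 1) * n - (p : ℤ) * p ≤ 0 := by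
        have hp' : (1 : ℤ) ≤ p := by exact_mod_cast hp1
        nlinarith [Nat.cast_nonneg (α := ℤ) n]
      exact this.trans (Int.ofNat_nonneg _)
  have hle2 : (exNum n Pr : ℤ) ≤ ((p : ℤ) - 1) * n + C₁ := by
    calc (exNum n Pr : ℤ) ≤ (((p - 1) * n + C₁ : ℕ) : ℤ) := Int.ofNat_le.mpr hsup_le
      _ = ((p : ℤ) - 1) * n + C₁ := by rw [Nat.cast_add, Nat.cast_mul, hcastp]
  rw [abs_le]
  constructor
  · have h1 : (0 : ℤ) ≤ C₁ := Int.ofNat_nonneg _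
    linarith
  · have h2 : (0 : ℤ) ≤ (p : ℤ) * p := by positivity
    linarith
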